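/- Let C be the category whose objects are the natural numbers and whose morphisms m ⟶ n are all functions Fin(m+1) → Fin(n+1), and let D be the wide subcategory of C with only the injective functions. Let NDSSet be the category whose objects are the nondegenerate presheaves Σ : Cᵒᵖ ⥤ Type and whose morphisms are the nondegenerate natural transformations (those whose components send nondegenerate simplices to nondegenerate simplices). Then the category of presheaves Dᵒᵖ ⥤ Type is equivalent to NDSSet. -/

import Mathlib

open CategoryTheory Opposite Function

open CategoryTheory Opposite

/-- The category whose objects are the natural numbers and whose morphisms
`m ⟶ n` are all functions `Fin (m+1) → Fin (n+1)`. -/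
structure UCat where
  len : ℕ

instance : Category UCat where
  Hom a b := Fin (a.len + 1) → Fin (b.len + 1)
  id _ := id
  comp f g := g ∘ f

/-- The wide subcategory of `UCat` with only the injective functions. -/
structure UDCat where
  len : ℕ

instance : Category UDCat where
  Hom a b := {f : Fin (a.len + 1) → Fin (b.len + 1) // Function.Injective f}
  id _ := ⟨id, Function.injective_id⟩
  comp f g := ⟨g.1 ∘ f.1, g.2.comp f.2⟩

/-- An `x`-simplex `γ` of an unoriented simplicial set `F` is degenerate if
`x.len ≥ 1` and `γ` lies in the image of the map `F(g)` induced by some function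
`g : Fin (x.len + 1) → Fin x.len`. -/
def IsDegenerate (F : UCatᵒᵖ ⥤ Type) (x : UCat) (γ : F.obj (op x)) : Prop :=
  ∃ m : UCat, x.len = m.len + 1 ∧ ∃ g : x ⟶ m, γ ∈ Set.range (F.map g.op)

/-- An unoriented simplicial set is nondegenerate if the maps induced by injective
functions take nondegenerate simplices to nondegenerate ones. -/
def IsNondegenerateSSet (F : UCatᵒᵖ ⥤ Type) : Prop :=
  ∀ (a b : UCat) (α : a ⟶ b), Function.Injective α →
    ∀ γ : F.obj (op b), ¬ IsDegenerate F b γ → ¬ IsDegenerate F a (F.map α.op γ)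

/-- A natural transformation preserves nondegeneracy if its components send
nondegenerate simplices to nondegenerate simplices. -/
def PreservesND {F G : UCatᵒᵖ ⥤ Type} (η : F ⟶ G) : Prop :=
  ∀ (x : UCat) (γ : F.obj (op x)), ¬ IsDegenerate F x γ → ¬ IsDegenerate G x (η.app (op x) γ)

/-- The category of nondegenerate unoriented simplicial sets with nondegenerate
morphisms between them. -/
structure NDSSet where
  F : UCatᵒᵖ ⥤ Type
  nd : IsNondegenerateSSet F

instance : Category NDSSet where
  Hom X Y := {η : X.F ⟶ Y.F // PreservesND η}
  id X := ⟨𝟙 X.F, by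
    intro x γ h
    simpa using h⟩
  comp f g := ⟨f.1 ≫ g.1, by
    intro x γ h
    have h1 := f.2 x γ h
    have h2 := g.2 x _ h1
    simpa using h2⟩


theorem factor_exists {n m : ℕ} (f : Fin (n+1) → Fin (m+1)) :
    ∃ (k : ℕ) (q : Fin (n+1) → Fin (k+1)) (i : Fin (k+1) → Fin (m+1)),
      Function.Surjective q ∧ Function.Injective i ∧ i ∘ q = f := by
  classical
  have hSne : (Finset.image f Finset.univ).Nonempty := ⟨f 0, by simp⟩
  have hcard : 1 ≤ (Finset.image f Finset.univ).card := Finset.card_pos.mpr hSne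
  obtain ⟨k, hk⟩ : ∃ k, (Finset.image f Finset.univ).card = k + 1 := ⟨(Finset.image f Finset.univ).card - 1, by omega⟩
  have e : Fin (k+1) ≃o (Finset.image f Finset.univ : Finset (Fin (m+1))) :=
    Finset.orderIsoOfFin _ hk
  have hmem : ∀ x, f x ∈ Finset.image f Finset.univ := fun x => by simp
  refine ⟨k, fun x => e.symm ⟨f x, hmem x⟩, fun j => (e j : Fin (m+1)), ?_, ?_, ?_⟩
  · intro j
    have hy := (e j).2
    rw [Finset.mem_image] at hy
    obtain ⟨y, -, hy⟩ := hy
    refine ⟨y, ?_⟩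
    have : (⟨f y, hmem y⟩ : {x // x ∈ Finset.image f Finset.univ}) = e j := Subtype.ext hy
    simp only [this, OrderIso.symm_apply_apply]
  · exact fun a b hab => e.injective (Subtype.ext hab)
  · funext x; simp

theorem bij_agree {p r : ℕ} {σ τ : Fin p → Fin r} (hσ : Function.Surjective σ) (hτ : Function.Injective τ)
    (y : Fin p) (h : ∀ z, z ≠ y → σ z = τ z) : σ y = τ y := by
  obtain ⟨z, hz⟩ := hσ (τ y)
  by_cases hzy : z = y
  · subst hzy; exact hz
  · exact absurd (hτ ((h z hzy).symm.trans hz)) hzy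

theorem section_exists {n m : ℕ} (g : Fin (n+1) → Fin (m+1)) (hg : Function.Surjective g)
    (a : Fin (n+1)) : ∃ s : Fin (m+1) → Fin (n+1), g ∘ s = id ∧ s (g a) = a := by
  classical
  refine ⟨fun y => if y = g a then a else surjInv hg y, funext fun y => ?_, by simp⟩
  by_cases h : y = g a <;> simp [h, surjInv_eq hg]

theorem factor_unique {n k k' m : ℕ} {q : Fin (n+1) → Fin (k+1)} {i : Fin (k+1) → Fin (m+1)}
    {q' : Fin (n+1) → Fin (k'+1)} {i' : Fin (k'+1) → Fin (m+1)}
    (hq : Function.Surjective q) (hi : Function.Injective i) (hq' : Function.Surjective q') (hi' : Function.Injective i')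
    (h : i ∘ q = i' ∘ q') :
    ∃ σ : Fin (k+1) → Fin (k'+1), Function.Bijective σ ∧ σ ∘ q = q' ∧ i' ∘ σ = i := by
  obtain ⟨s, hs, -⟩ := section_exists q hq 0
  have hcomm : ∀ x, (q' ∘ s) (q x) = q' x := by
    intro x
    apply hi'
    have h1 : i' (q' (s (q x))) = i (q (s (q x))) := (congrFun h (s (q x))).symm
    have h2 : q (s (q x)) = q x := congrFun hs (q x)
    have h3 := congrFun h x
    simp only [Function.comp_apply] at h3
    simp only [Function.comp_apply, h1, h2, h3]
  have hretr : i' ∘ (q' ∘ s) = i := by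
    funext y
    obtain ⟨x, rfl⟩ := hq y
    simp only [Function.comp_apply] at *
    rw [show q' (s (q x)) = q' x from hcomm x]
    exact (congrFun h x).symm
  refine ⟨q' ∘ s, ⟨?_, fun y => ?_⟩, funext hcomm, hretr⟩
  · intro a b hab
    apply hi
    have := congrFun hretr a
    have hb := congrFun hretr b
    simp only [Function.comp_apply] at this hb hab
    rw [← this, ← hb, hab]
  · obtain ⟨x, rfl⟩ := hq' y
    exact ⟨q x, hcomm x⟩
namespace Stmt14

/-- view a function as a `UCat` hom -/
def cHom {a b : ℕ} (f : Fin (a+1) → Fin (b+1)) : (⟨a⟩ : UCat) ⟶ ⟨b⟩ := f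

lemma map_map (F : UCatᵒᵖ ⥤ Type) {a b c : ℕ} (f : Fin (a+1) → Fin (b+1))
    (g : Fin (b+1) → Fin (c+1)) (x : F.obj (op ⟨c⟩)) :
    F.map (cHom f).op (F.map (cHom g).op x) = F.map (cHom (g ∘ f)).op x := by
  rw [show cHom (g ∘ f) = cHom f ≫ cHom g from rfl, op_comp, F.map_comp]
  rfl

lemma map_id_apply (F : UCatᵒᵖ ⥤ Type) {a : ℕ} (x : F.obj (op ⟨a⟩)) :
    F.map (cHom (id : Fin (a+1) → Fin (a+1))).op x = x := by
  rw [show cHom (id : Fin (a+1) → Fin (a+1)) = 𝟙 (⟨a⟩ : UCat) from rfl, op_id, F.map_id]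
  rfl

/-- degenerate iff image of a surjection onto something strictly smaller -/
lemma deg_of_surj {F : UCatᵒᵖ ⥤ Type} {n k : ℕ} (q : Fin (n+1) → Fin (k+1))
    (hq : Function.Surjective q) (hk : k < n) (δ : F.obj (op ⟨k⟩)) :
    IsDegenerate F ⟨n⟩ (F.map (cHom q).op δ) := by
  classical
  obtain ⟨p, rfl⟩ : ∃ p, n = p + 1 := ⟨n - 1, by omega⟩
  -- injection j : Fin (k+1) → Fin (p+1), retraction r
  have hkp : k + 1 ≤ p + 1 := by omega
  set j : Fin (k+1) → Fin (p+1) := Fin.castLE hkp with hj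
  have hjinj : Function.Injective j := Fin.castLE_injective hkp
  have hr : ∃ r : Fin (p+1) → Fin (k+1), r ∘ j = id :=
    ⟨Function.invFun j, funext fun x => Function.leftInverse_invFun hjinj x⟩
  obtain ⟨r, hrj⟩ := hr
  refine ⟨⟨p⟩, rfl, cHom (j ∘ q), F.map (cHom r).op δ, ?_⟩
  rw [map_map, ← Function.comp_assoc, hrj, Function.id_comp]

lemma deg_iff {F : UCatᵒᵖ ⥤ Type} {n : ℕ} (γ : F.obj (op ⟨n⟩)) :
    IsDegenerate F ⟨n⟩ γ ↔
      ∃ (k : ℕ) (q : Fin (n+1) → Fin (k+1)) (δ : F.obj (op ⟨k⟩)),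
        Function.Surjective q ∧ k < n ∧ γ = F.map (cHom q).op δ := by
  constructor
  · rintro ⟨m, hm, g, δ, hγ⟩
    obtain ⟨k, q, i, hq, hi, hiq⟩ := factor_exists g
    have hm' : n = m.len + 1 := hm
    have h1 : k + 1 ≤ m.len + 1 := by simpa using Fintype.card_le_of_injective i hi
    have hk : k < n := by omega
    refine ⟨k, q, F.map (cHom i).op δ, hq, hk, ?_⟩
    rw [map_map, hiq]
    exact hγ.symm
  · rintro ⟨k, q, δ, hq, hk, rfl⟩
    exact deg_of_surj q hq hk δ

/-- pulling back a nondegenerate simplex: the map must be injective -/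
lemma inj_of_nd {F : UCatᵒᵖ ⥤ Type} {k k' : ℕ} (h : Fin (k+1) → Fin (k'+1))
    {δ : F.obj (op ⟨k⟩)} {δ' : F.obj (op ⟨k'⟩)} (hδ : ¬ IsDegenerate F ⟨k⟩ δ)
    (heq : δ = F.map (cHom h).op δ') : Function.Injective h := by
  obtain ⟨j, q, i, hq, hi, hiq⟩ := factor_exists h
  have hjk : j + 1 ≤ k + 1 := by simpa using Fintype.card_le_of_surjective q hq
  rcases lt_or_eq_of_le hjk with hlt | hEq
  · exfalso
    apply hδ
    rw [heq, ← hiq, ← map_map]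
    exact deg_of_surj q hq (by omega) _
  · -- q is injective since card equal
    have hcard : Fintype.card (Fin (k+1)) = Fintype.card (Fin (j+1)) := by simp; omega
    have hqinj : Function.Injective q := by
      have := (Fintype.bijective_iff_surjective_and_card q).2 ⟨hq, by simpa using hcard⟩
      exact this.1
    rw [← hiq]
    exact hi.comp hqinj

/-- every simplex is a (surjective) degeneracy of a nondegenerate one -/
lemma ez_exists {F : UCatᵒᵖ ⥤ Type} (hF : IsNondegenerateSSet F) {n : ℕ}
    (γ : F.obj (op ⟨n⟩)) :
    ∃ (k : ℕ) (q : Fin (n+1) → Fin (k+1)) (δ : F.obj (op ⟨k⟩)),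
      Function.Surjective q ∧ ¬ IsDegenerate F ⟨k⟩ δ ∧ γ = F.map (cHom q).op δ := by
  induction n using Nat.strong_induction_on with
  | _ n ih =>
    by_cases hγ : IsDegenerate F ⟨n⟩ γ
    · rw [deg_iff] at hγ
      obtain ⟨k, q, δ, hq, hk, rfl⟩ := hγ
      obtain ⟨k', q', δ', hq', hδ', rfl⟩ := ih k hk δ
      exact ⟨k', q' ∘ q, δ', hq'.comp hq, hδ', by rw [map_map]⟩
    · exact ⟨n, id, γ, surjective_id, hγ, (map_id_apply F γ).symm⟩

/-- Eilenberg–Zilber uniqueness (symmetric version) -/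
lemma ez_unique {F : UCatᵒᵖ ⥤ Type} {n k k' : ℕ}
    {g : Fin (n+1) → Fin (k+1)} {g' : Fin (n+1) → Fin (k'+1)}
    (hg : Function.Surjective g) (hg' : Function.Surjective g')
    {δ : F.obj (op ⟨k⟩)} {δ' : F.obj (op ⟨k'⟩)}
    (hδ : ¬ IsDegenerate F ⟨k⟩ δ) (hδ' : ¬ IsDegenerate F ⟨k'⟩ δ')
    (h : F.map (cHom g).op δ = F.map (cHom g').op δ') :
    ∃ σ : Fin (k+1) → Fin (k'+1), Function.Bijective σ ∧ σ ∘ g = g' ∧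
      δ = F.map (cHom σ).op δ' := by
  -- for any section s of g, δ = F(g'∘s) δ' and g'∘s is injective
  have key : ∀ s : Fin (k+1) → Fin (n+1), g ∘ s = id →
      δ = F.map (cHom (g' ∘ s)).op δ' ∧ Function.Injective (g' ∘ s) := by
    intro s hs
    have h1 : δ = F.map (cHom (g' ∘ s)).op δ' := by
      have : δ = F.map (cHom s).op (F.map (cHom g).op δ) := by
        rw [map_map, hs, map_id_apply]
      rw [this, h, map_map]
    exact ⟨h1, inj_of_nd _ hδ h1⟩
  have key' : ∀ t : Fin (k'+1) → Fin (n+1), g' ∘ t = id → Function.Injective (g ∘ t) := by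
    intro t ht
    have h1 : δ' = F.map (cHom (g ∘ t)).op δ := by
      have : δ' = F.map (cHom t).op (F.map (cHom g').op δ') := by
        rw [map_map, ht, map_id_apply]
      rw [this, ← h, map_map]
    exact inj_of_nd _ hδ' h1
  -- k = k'
  obtain ⟨s₀, hs₀, -⟩ := section_exists g hg 0
  obtain ⟨t₀, ht₀, -⟩ := section_exists g' hg' 0
  have hkk' : k + 1 ≤ k' + 1 := by
    simpa using Fintype.card_le_of_injective _ (key s₀ hs₀).2
  have hk'k : k' + 1 ≤ k + 1 := by
    simpa using Fintype.card_le_of_injective _ (key' t₀ ht₀)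
  obtain rfl : k = k' := by omega
  -- kernels agree
  have hker : ∀ a b, g a = g b → g' a = g' b := by
    intro a b hab
    obtain ⟨s, hs, hsa⟩ := section_exists g hg a
    classical
    set s' : Fin (k+1) → Fin (n+1) := Function.update s (g a) b with hs'
    have hs'sec : g ∘ s' = id := by
      funext y
      by_cases hy : y = g a
      · simp [hs', hy, ← hab]
      · simp only [hs', Function.comp_apply, Function.update_of_ne hy]
        exact congrFun hs y
    have hbij : Function.Bijective (g' ∘ s) := by
      refine (Fintype.bijective_iff_injective_and_card _).2 ⟨(key s hs).2, by simp⟩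
    have hinj' : Function.Injective (g' ∘ s') := (key s' hs'sec).2
    have hagree : ∀ z, z ≠ g a → (g' ∘ s) z = (g' ∘ s') z := by
      intro z hz
      simp [hs', Function.update_of_ne hz]
    have := bij_agree hbij.2 hinj' (g a) hagree
    simp only [Function.comp_apply, hsa, hs', Function.update_self] at this
    exact this
  -- conclude
  refine ⟨g' ∘ s₀, ?_, ?_, (key s₀ hs₀).1⟩
  · exact (Fintype.bijective_iff_injective_and_card _).2 ⟨(key s₀ hs₀).2, by simp⟩
  · funext x
    exact hker (s₀ (g x)) x (congrFun hs₀ (g x))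

end Stmt14
namespace Stmt14

/-- the functor sending a nondegenerate simplicial set to its presheaf of
nondegenerate simplices -/
def RF (S : NDSSet) : UDCatᵒᵖ ⥤ Type where
  obj y := {γ : S.F.obj (op ⟨y.unop.len⟩) // ¬ IsDegenerate S.F ⟨y.unop.len⟩ γ}
  map {y z} α := ↾fun γ => ⟨S.F.map (cHom α.unop.1).op γ.1,
    S.nd _ _ (cHom α.unop.1) α.unop.2 γ.1 γ.2⟩
  map_id y := by
    ext γ
    exact (map_id_apply S.F γ.1)
  map_comp {x y z} α β := by
    ext γ
    exact (map_map S.F β.unop.1 α.unop.1 γ.1).symm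

def RND : NDSSet ⥤ (UDCatᵒᵖ ⥤ Type) where
  obj := RF
  map {S T} f :=
    { app := fun y => ↾fun γ => ⟨f.1.app (op ⟨y.unop.len⟩) γ.1, f.2 _ γ.1 γ.2⟩
      naturality := fun y z α => by
        ext γ
        apply Subtype.ext
        exact types_congr_hom (f.1.naturality (cHom α.unop.1).op) γ.1 }
  map_id S := rfl
  map_comp f g := rfl

instance : RND.Faithful where
  map_injective {S T} {f g} h := by
    apply Subtype.ext
    apply NatTrans.ext
    ext x γ
    obtain ⟨k, q, δ, hq, hδ, rfl⟩ := ez_exists S.nd (γ : S.F.obj (op ⟨x.unop.len⟩))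
    have hf := types_congr_hom (f.1.naturality (cHom q).op) δ
    have hg := types_congr_hom (g.1.naturality (cHom q).op) δ
    simp only [types_comp_apply] at hf hg
    have hfg : f.1.app (op ⟨k⟩) δ = g.1.app (op ⟨k⟩) δ := by
      have := congrArg (fun (η : RF S ⟶ RF T) =>
        (η.app (op (⟨k⟩ : UDCat)) ⟨δ, hδ⟩).1) h
      exact this
    calc f.1.app x (S.F.map (cHom q).op δ)
        = T.F.map (cHom q).op (f.1.app (op ⟨k⟩) δ) := hf
      _ = T.F.map (cHom q).op (g.1.app (op ⟨k⟩) δ) := by rw [hfg]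
      _ = g.1.app x (S.F.map (cHom q).op δ) := hg.symm

section Fullness

variable {S T : NDSSet} (f : RF S ⟶ RF T)

/-- a surjective-nondegenerate decomposition of a simplex -/
structure Dec (F : UCatᵒᵖ ⥤ Type) (n : ℕ) (γ : F.obj (op ⟨n⟩)) where
  k : ℕ
  q : Fin (n+1) → Fin (k+1)
  δ : F.obj (op ⟨k⟩)
  hq : Function.Surjective q
  hδ : ¬ IsDegenerate F ⟨k⟩ δ
  eq : γ = F.map (cHom q).op δ

lemma dec_nonempty {F : UCatᵒᵖ ⥤ Type} (hF : IsNondegenerateSSet F) {n : ℕ}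
    (γ : F.obj (op ⟨n⟩)) : Nonempty (Dec F n γ) := by
  obtain ⟨k, q, δ, h1, h2, h3⟩ := ez_exists hF γ
  exact ⟨⟨k, q, δ, h1, h2, h3⟩⟩

noncomputable def theDec {F : UCatᵒᵖ ⥤ Type} (hF : IsNondegenerateSSet F) {n : ℕ}
    (γ : F.obj (op ⟨n⟩)) : Dec F n γ := (dec_nonempty hF γ).some

/-- the extension of `f` to all simplices -/
noncomputable def extApp {n : ℕ} (γ : S.F.obj (op ⟨n⟩)) : T.F.obj (op ⟨n⟩) :=
  T.F.map (cHom (theDec S.nd γ).q).op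
    (f.app (op (⟨(theDec S.nd γ).k⟩ : UDCat)) ⟨(theDec S.nd γ).δ, (theDec S.nd γ).hδ⟩).1

lemma ext_spec {n : ℕ} (γ : S.F.obj (op ⟨n⟩)) {k : ℕ} (q : Fin (n+1) → Fin (k+1))
    (hq : Function.Surjective q) (δ : S.F.obj (op ⟨k⟩)) (hδ : ¬ IsDegenerate S.F ⟨k⟩ δ)
    (heq : γ = S.F.map (cHom q).op δ) :
    extApp f γ = T.F.map (cHom q).op (f.app (op (⟨k⟩ : UDCat)) ⟨δ, hδ⟩).1 := by
  set d := theDec S.nd γ with hd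
  have h0 : S.F.map (cHom d.q).op d.δ = S.F.map (cHom q).op δ := by
    rw [← d.eq, ← heq]
  obtain ⟨σ, hσbij, hσq, hσδ⟩ := ez_unique d.hq hq d.hδ hδ h0
  have hnat := NatTrans.naturality_apply f (Quiver.Hom.op (⟨σ, hσbij.1⟩ :
    (⟨d.k⟩ : UDCat) ⟶ ⟨k⟩)) (⟨δ, hδ⟩ : (RF S).obj (op (⟨k⟩ : UDCat)))
  have harg : (RF S).map (Quiver.Hom.op (⟨σ, hσbij.1⟩ : (⟨d.k⟩ : UDCat) ⟶ ⟨k⟩))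
      (⟨δ, hδ⟩ : (RF S).obj (op (⟨k⟩ : UDCat))) = ⟨d.δ, d.hδ⟩ := Subtype.ext hσδ.symm
  rw [harg] at hnat
  have hval : (f.app (op (⟨d.k⟩ : UDCat)) ⟨d.δ, d.hδ⟩).1
      = T.F.map (cHom σ).op (f.app (op (⟨k⟩ : UDCat)) ⟨δ, hδ⟩).1 :=
    congrArg Subtype.val hnat
  show T.F.map (cHom d.q).op (f.app (op (⟨d.k⟩ : UDCat)) ⟨d.δ, d.hδ⟩).1
      = T.F.map (cHom q).op (f.app (op (⟨k⟩ : UDCat)) ⟨δ, hδ⟩).1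
  rw [hval, map_map, hσq]

lemma ext_natural {a b : ℕ} (α : Fin (a+1) → Fin (b+1)) (γ : S.F.obj (op ⟨b⟩)) :
    extApp f (S.F.map (cHom α).op γ) = T.F.map (cHom α).op (extApp f γ) := by
  set d := theDec S.nd γ with hd
  obtain ⟨j, q', i, hq', hi, hiq⟩ := factor_exists (d.q ∘ α)
  have hδ'' : ¬ IsDegenerate S.F ⟨j⟩ (S.F.map (cHom i).op d.δ) :=
    S.nd _ _ (cHom i) hi d.δ d.hδ
  have heq : S.F.map (cHom α).op γ = S.F.map (cHom q').op (S.F.map (cHom i).op d.δ) := by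
    rw [map_map, hiq, ← map_map, ← d.eq]
  rw [ext_spec f _ q' hq' _ hδ'' heq]
  have hnat := NatTrans.naturality_apply f (Quiver.Hom.op (⟨i, hi⟩ :
    (⟨j⟩ : UDCat) ⟶ ⟨d.k⟩)) (⟨d.δ, d.hδ⟩ : (RF S).obj (op (⟨d.k⟩ : UDCat)))
  have hval : (f.app (op (⟨j⟩ : UDCat)) ⟨S.F.map (cHom i).op d.δ, hδ''⟩).1
      = T.F.map (cHom i).op (f.app (op (⟨d.k⟩ : UDCat)) ⟨d.δ, d.hδ⟩).1 := by
    have : (RF S).map (Quiver.Hom.op (⟨i, hi⟩ : (⟨j⟩ : UDCat) ⟶ ⟨d.k⟩))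
        (⟨d.δ, d.hδ⟩ : (RF S).obj (op (⟨d.k⟩ : UDCat)))
        = ⟨S.F.map (cHom i).op d.δ, hδ''⟩ := Subtype.ext rfl
    rw [this] at hnat
    exact congrArg Subtype.val hnat
  rw [hval, map_map, hiq]
  rw [show extApp f γ = T.F.map (cHom d.q).op
    (f.app (op (⟨d.k⟩ : UDCat)) ⟨d.δ, d.hδ⟩).1 from ext_spec f γ d.q d.hq d.δ d.hδ d.eq]
  rw [map_map]

noncomputable def extNat : S.F ⟶ T.F where
  app x := ↾fun γ => extApp f (γ : S.F.obj (op ⟨x.unop.len⟩))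
  naturality {x y} h := by
    ext γ
    exact ext_natural f h.unop γ

lemma ext_nd_spec {n : ℕ} (γ : S.F.obj (op ⟨n⟩)) (hγ : ¬ IsDegenerate S.F ⟨n⟩ γ) :
    extApp f γ = (f.app (op (⟨n⟩ : UDCat)) ⟨γ, hγ⟩).1 := by
  rw [ext_spec f γ id surjective_id γ hγ (map_id_apply S.F γ).symm, map_id_apply]

lemma ext_pnd : PreservesND (extNat f) := fun x γ hγ => by
  have he := ext_nd_spec f (γ : S.F.obj (op (⟨x.len⟩ : UCat))) hγ
  show ¬ IsDegenerate T.F ⟨x.len⟩ (extApp f (γ : S.F.obj (op (⟨x.len⟩ : UCat))))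
  rw [he]
  exact (f.app (op (⟨x.len⟩ : UDCat)) ⟨γ, hγ⟩).2

instance : RND.Full where
  map_surjective {S T} f := by
    refine ⟨⟨extNat f, ext_pnd f⟩, ?_⟩
    apply NatTrans.ext
    ext y γ
    apply Subtype.ext
    show extApp f γ.1 = (f.app y γ).1
    rw [ext_nd_spec f γ.1 γ.2]
    rfl

end Fullness

end Stmt14
namespace Stmt14

section Sharp

variable (X : UDCatᵒᵖ ⥤ Type)

/-- view an injective function as a `UDCat` hom -/
def dHom {a b : ℕ} (f : Fin (a+1) → Fin (b+1)) (hf : Function.Injective f) :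
    (⟨a⟩ : UDCat) ⟶ ⟨b⟩ := ⟨f, hf⟩

lemma dmap_map {a b c : ℕ} (f : Fin (a+1) → Fin (b+1)) (hf : Function.Injective f)
    (g : Fin (b+1) → Fin (c+1)) (hg : Function.Injective g)
    (x : X.obj (op (⟨c⟩ : UDCat))) :
    X.map (dHom f hf).op (X.map (dHom g hg).op x)
      = X.map (dHom (g ∘ f) (hg.comp hf)).op x := by
  rw [show dHom (g ∘ f) (hg.comp hf) = dHom f hf ≫ dHom g hg from rfl, op_comp, X.map_comp]
  rfl

lemma dmap_id {a : ℕ} (h : Function.Injective (id : Fin (a+1) → Fin (a+1)))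
    (x : X.obj (op (⟨a⟩ : UDCat))) : X.map (dHom id h).op x = x := by
  rw [show dHom id h = 𝟙 (⟨a⟩ : UDCat) from rfl, op_id, X.map_id]
  rfl

lemma dmap_congr {a b : ℕ} {f g : Fin (a+1) → Fin (b+1)} (h : f = g)
    (hf : Function.Injective f) (hg : Function.Injective g)
    (x : X.obj (op (⟨b⟩ : UDCat))) :
    X.map (dHom f hf).op x = X.map (dHom g hg).op x := by
  subst h; rfl

/-- elements: pairs of a surjection and an element of `X` -/
def El (n : ℕ) : Type :=
  Σ k : ℕ, {g : Fin (n+1) → Fin (k+1) // Function.Surjective g} × X.obj (op (⟨k⟩ : UDCat))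

instance elSetoid (n : ℕ) : Setoid (El X n) where
  r a b := ∃ σ : Fin (a.1+1) ≃ Fin (b.1+1),
    (⇑σ ∘ a.2.1.1 = b.2.1.1) ∧ a.2.2 = X.map (dHom ⇑σ σ.injective).op b.2.2
  iseqv := by
    constructor
    · intro a
      refine ⟨Equiv.refl _, funext fun x => rfl, ?_⟩
      rw [dmap_congr X (show ⇑(Equiv.refl (Fin (a.1+1))) = id from rfl) _ Function.injective_id,
        dmap_id]
    · rintro a b ⟨σ, h1, h2⟩
      refine ⟨σ.symm, ?_, ?_⟩
      · funext x
        have := congrFun h1 x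
        simp only [Function.comp_apply] at this ⊢
        rw [← this, Equiv.symm_apply_apply]
      · rw [h2, dmap_map, dmap_congr X (show ⇑σ ∘ ⇑σ.symm = id by
          funext y; simp) _ Function.injective_id, dmap_id]
    · rintro a b c ⟨σ, h1, h2⟩ ⟨τ, g1, g2⟩
      refine ⟨σ.trans τ, ?_, ?_⟩
      · funext x
        have h1' := congrFun h1 x
        have g1' := congrFun g1 x
        simp only [Function.comp_apply, Equiv.trans_apply] at h1' g1' ⊢
        rw [h1', g1']
      · rw [h2, g2, dmap_map,
          dmap_congr X (show ⇑τ ∘ ⇑σ = ⇑(σ.trans τ) from rfl) _ (σ.trans τ).injective]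

def ShObj (n : ℕ) : Type := Quotient (elSetoid X n)

/-- a chosen surjective/injective factorization -/
structure Factn {n m : ℕ} (f : Fin (n+1) → Fin (m+1)) where
  k : ℕ
  q : Fin (n+1) → Fin (k+1)
  i : Fin (k+1) → Fin (m+1)
  hq : Function.Surjective q
  hi : Function.Injective i
  comp : i ∘ q = f

noncomputable def theFact {n m : ℕ} (f : Fin (n+1) → Fin (m+1)) : Factn f := by
  refine Nonempty.some ?_
  obtain ⟨k, q, i, h1, h2, h3⟩ := factor_exists f
  exact ⟨⟨k, q, i, h1, h2, h3⟩⟩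

noncomputable def mkSh {n m : ℕ} (f : Fin (n+1) → Fin (m+1))
    (x : X.obj (op (⟨m⟩ : UDCat))) : ShObj X n :=
  Quotient.mk _ ⟨(theFact f).k, ⟨(theFact f).q, (theFact f).hq⟩,
    X.map (dHom (theFact f).i (theFact f).hi).op x⟩

lemma mkSh_eq {n m k : ℕ} (f : Fin (n+1) → Fin (m+1)) (x : X.obj (op (⟨m⟩ : UDCat)))
    (q : Fin (n+1) → Fin (k+1)) (i : Fin (k+1) → Fin (m+1))
    (hq : Function.Surjective q) (hi : Function.Injective i) (hcomp : i ∘ q = f) :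
    mkSh X f x = Quotient.mk _ ⟨k, ⟨q, hq⟩, X.map (dHom i hi).op x⟩ := by
  apply Quotient.sound
  obtain ⟨σ, hσ, hσq, hσi⟩ :=
    factor_unique (theFact f).hq (theFact f).hi hq hi ((theFact f).comp.trans hcomp.symm)
  refine ⟨Equiv.ofBijective σ hσ, hσq, ?_⟩
  rw [dmap_map, dmap_congr X (show i ∘ ⇑(Equiv.ofBijective σ hσ) = (theFact f).i from hσi)
    _ (theFact f).hi]

lemma mkSh_inj_comp {n m p : ℕ} (f : Fin (n+1) → Fin (m+1))
    (i : Fin (m+1) → Fin (p+1)) (hi : Function.Injective i)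
    (x : X.obj (op (⟨p⟩ : UDCat))) :
    mkSh X (i ∘ f) x = mkSh X f (X.map (dHom i hi).op x) := by
  rw [mkSh_eq X (i ∘ f) x (theFact f).q (i ∘ (theFact f).i) (theFact f).hq
      (hi.comp (theFact f).hi) (by rw [Function.comp_assoc, (theFact f).comp]),
    mkSh_eq X f (X.map (dHom i hi).op x) (theFact f).q (theFact f).i (theFact f).hq
      (theFact f).hi (theFact f).comp, dmap_map]

noncomputable def shMap {a b : ℕ} (h : Fin (a+1) → Fin (b+1)) :
    ShObj X b → ShObj X a :=
  Quotient.lift (fun e => mkSh X (e.2.1.1 ∘ h) e.2.2) (by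
    rintro ⟨k, g, x⟩ ⟨k', g', x'⟩ ⟨σ, h1, h2⟩
    simp only at h1 h2 ⊢
    calc mkSh X (g.1 ∘ h) x
        = mkSh X (g.1 ∘ h) (X.map (dHom ⇑σ σ.injective).op x') := by rw [← h2]
      _ = mkSh X (⇑σ ∘ (g.1 ∘ h)) x' := (mkSh_inj_comp X _ _ _ _).symm
      _ = mkSh X (g'.1 ∘ h) x' := by rw [← Function.comp_assoc, h1])

lemma shMap_mk {a b k : ℕ} (h : Fin (a+1) → Fin (b+1))
    (g : {g : Fin (b+1) → Fin (k+1) // Function.Surjective g})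
    (x : X.obj (op (⟨k⟩ : UDCat))) :
    shMap X h (Quotient.mk _ ⟨k, g, x⟩) = mkSh X (g.1 ∘ h) x := rfl

lemma shMap_id {a : ℕ} (e : ShObj X a) : shMap X id e = e := by
  induction e using Quotient.ind with
  | _ e =>
    obtain ⟨k, g, x⟩ := e
    rw [shMap_mk, Function.comp_id,
      mkSh_eq X g.1 x g.1 id g.2 Function.injective_id (Function.id_comp g.1), dmap_id]

lemma shMap_comp {a a' b : ℕ} (h : Fin (a+1) → Fin (b+1)) (h' : Fin (a'+1) → Fin (a+1))
    (e : ShObj X b) : shMap X (h ∘ h') e = shMap X h' (shMap X h e) := by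
  induction e using Quotient.ind with
  | _ e =>
    obtain ⟨k, g, x⟩ := e
    have hrhs : shMap X h' (mkSh X (g.1 ∘ h) x)
        = mkSh X ((theFact (g.1 ∘ h)).q ∘ h')
          (X.map (dHom (theFact (g.1 ∘ h)).i (theFact (g.1 ∘ h)).hi).op x) := rfl
    rw [shMap_mk, shMap_mk, hrhs, ← mkSh_inj_comp]
    have : (theFact (g.1 ∘ h)).i ∘ ((theFact (g.1 ∘ h)).q ∘ h') = g.1 ∘ (h ∘ h') := by
      rw [← Function.comp_assoc, (theFact (g.1 ∘ h)).comp, Function.comp_assoc]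
    rw [this]

noncomputable def Sh : UCatᵒᵖ ⥤ Type where
  obj x := ShObj X x.unop.len
  map {x y} h := ↾shMap X h.unop
  map_id x := by ext e; exact shMap_id X e
  map_comp {x y z} h h' := by ext e; exact shMap_comp X h.unop h'.unop e

lemma sh_deg_of_lt {n k : ℕ} (hk : k < n)
    (g : {g : Fin (n+1) → Fin (k+1) // Function.Surjective g})
    (x : X.obj (op (⟨k⟩ : UDCat))) :
    IsDegenerate (Sh X) ⟨n⟩ (Quotient.mk _ ⟨k, g, x⟩) := by
  obtain ⟨p, rfl⟩ : ∃ p, n = p + 1 := ⟨n - 1, by omega⟩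
  have hkp : k + 1 ≤ p + 1 := by omega
  set j : Fin (k+1) → Fin (p+1) := Fin.castLE hkp with hj
  have hjinj : Function.Injective j := Fin.castLE_injective hkp
  set r : Fin (p+1) → Fin (k+1) := Function.invFun j with hr
  have hrj : r ∘ j = id := funext fun y => Function.leftInverse_invFun hjinj y
  have hrsurj : Function.Surjective r := fun y => ⟨j y, congrFun hrj y⟩
  refine ⟨⟨p⟩, rfl, cHom (j ∘ g.1),
    Quotient.mk _ ⟨k, ⟨r, hrsurj⟩, x⟩, ?_⟩
  have key : mkSh X (r ∘ (j ∘ g.1)) x = Quotient.mk (elSetoid X (p+1)) ⟨k, g, x⟩ := by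
    have hc : r ∘ (j ∘ g.1) = g.1 := by rw [← Function.comp_assoc, hrj, Function.id_comp]
    rw [hc, mkSh_eq X g.1 x g.1 id g.2 Function.injective_id (Function.id_comp g.1), dmap_id]
  exact key

lemma sh_deg_lt {n k : ℕ}
    (g : {g : Fin (n+1) → Fin (k+1) // Function.Surjective g})
    (x : X.obj (op (⟨k⟩ : UDCat)))
    (hdeg : IsDegenerate (Sh X) ⟨n⟩ (Quotient.mk _ ⟨k, g, x⟩)) : k < n := by
  obtain ⟨m, hm, c, δ, hδ⟩ := hdeg
  have hm' : n = m.len + 1 := hm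
  induction δ using Quotient.ind with
  | _ e =>
    obtain ⟨k', g', x'⟩ := e
    have h1 : shMap X c (Quotient.mk _ ⟨k', g', x'⟩) = Quotient.mk _ ⟨k, g, x⟩ := hδ
    rw [shMap_mk] at h1
    obtain ⟨σ, -, -⟩ := Quotient.exact h1
    have hcard : (theFact (g'.1 ∘ c)).k + 1 = k + 1 := by
      simpa using Fintype.card_congr σ
    have h2 : (theFact (g'.1 ∘ c)).k + 1 ≤ k' + 1 := by
      simpa using Fintype.card_le_of_injective _ (theFact (g'.1 ∘ c)).hi
    have h3 : k' + 1 ≤ m.len + 1 := by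
      simpa using Fintype.card_le_of_surjective _ g'.2
    omega

lemma sh_nd : IsNondegenerateSSet (Sh X) := by
  intro a b α hα γ hγ
  induction γ using Quotient.ind with
  | _ e =>
    obtain ⟨k, g, x⟩ := e
    have hkb : k + 1 ≤ b.len + 1 := by simpa using Fintype.card_le_of_surjective _ g.2
    have hk : ¬ k < b.len := fun h => hγ (sh_deg_of_lt X h g x)
    obtain rfl : k = b.len := by omega
    have hgbij : Function.Bijective g.1 :=
      (Fintype.bijective_iff_surjective_and_card _).2 ⟨g.2, by simp⟩
    intro hdeg
    have h1 : (Sh X).map α.op (Quotient.mk _ ⟨b.len, g, x⟩) = mkSh X (g.1 ∘ α) x := rfl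
    rw [h1] at hdeg
    have hqinj : Function.Injective (theFact (g.1 ∘ α)).q := by
      intro u v huv
      have := congrFun (theFact (g.1 ∘ α)).comp u
      have h2 := congrFun (theFact (g.1 ∘ α)).comp v
      simp only [Function.comp_apply] at this h2
      have h3 : (g.1 ∘ α) u = (g.1 ∘ α) v := by
        simp only [Function.comp_apply]
        rw [← this, ← h2, huv]
      exact (hgbij.1.comp hα) h3
    have hcard : (theFact (g.1 ∘ α)).k = a.len := by
      have hb : Function.Bijective (theFact (g.1 ∘ α)).q :=
        ⟨hqinj, (theFact (g.1 ∘ α)).hq⟩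
      have := Fintype.card_of_bijective hb
      simpa using this.symm
    have := sh_deg_lt X _ _ hdeg
    omega

noncomputable def ShND : NDSSet := ⟨Sh X, sh_nd X⟩

end Sharp

end Stmt14
namespace Stmt14

variable (X : UDCatᵒᵖ ⥤ Type)

noncomputable def isoFun (n : ℕ) (x : X.obj (op (⟨n⟩ : UDCat))) :
    {γ : (Sh X).obj (op (⟨n⟩ : UCat)) // ¬ IsDegenerate (Sh X) ⟨n⟩ γ} :=
  ⟨Quotient.mk _ ⟨n, ⟨id, Function.surjective_id⟩, x⟩,
   fun hdeg => lt_irrefl n (sh_deg_lt X _ _ hdeg)⟩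

lemma isoFun_bij (n : ℕ) : Function.Bijective (isoFun X n) := by
  constructor
  · intro x x' h
    have h1 := congrArg Subtype.val h
    obtain ⟨σ, hσ1, hσ2⟩ := Quotient.exact h1
    have hid : ⇑σ = id := by
      funext t
      exact congrFun hσ1 t
    have hσ2' : x = X.map (dHom ⇑σ σ.injective).op x' := hσ2
    rw [hσ2', dmap_congr X hid _ Function.injective_id, dmap_id]
  · rintro ⟨γ, hnd⟩
    induction γ using Quotient.ind with
    | _ e =>
      obtain ⟨k, g, x⟩ := e
      have hkb : k + 1 ≤ n + 1 := by simpa using Fintype.card_le_of_surjective _ g.2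
      have hk : ¬ k < n := fun h => hnd (sh_deg_of_lt X h g x)
      obtain rfl : k = n := by omega
      have hgbij : Function.Bijective g.1 :=
        (Fintype.bijective_iff_surjective_and_card _).2 ⟨g.2, by simp⟩
      refine ⟨X.map (dHom g.1 hgbij.1).op x, ?_⟩
      apply Subtype.ext
      apply Quotient.sound
      exact ⟨Equiv.ofBijective g.1 hgbij, funext fun t => rfl, rfl⟩

noncomputable def shNatIso : X ≅ RND.obj (ShND X) :=
  NatIso.ofComponents
    (fun y => Equiv.toIso (Equiv.ofBijective _ (isoFun_bij X y.unop.len)))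
    (by
      intro y z α
      ext x
      apply Subtype.ext
      show Quotient.mk _ ⟨z.unop.len, ⟨id, Function.surjective_id⟩, X.map α x⟩
          = mkSh X (α.unop.1 ∘ id) x
      symm
      rw [Function.comp_id,
        mkSh_eq X α.unop.1 x id α.unop.1 Function.surjective_id α.unop.2
          (Function.comp_id _)]
      rfl)

instance : RND.EssSurj where
  mem_essImage Y := ⟨ShND Y, ⟨(shNatIso Y).symm⟩⟩

noncomputable instance : RND.IsEquivalence := {}

end Stmt14

/-- the category of presheaves on the injective subcategory is
equivalent to the category of nondegenerate unoriented simplicial sets with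
nondegenerate morphisms. -/
theorem stmt14 : Nonempty ((UDCatᵒᵖ ⥤ Type) ≌ NDSSet) :=
  ⟨Stmt14.RND.asEquivalence.symm⟩
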